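/- Let $(Z_n)_{n\ge 0}$ with $Z_0=0$, and fix $\varepsilon>0$ and $n\ge 1$. Define $Z^*_{a,b}:=\max_{a\le k\le b} Z_k$, $M_n := \#\{0\le k\le\lfloor\varepsilon n\rfloor - 1 : Z^*_{k+1, n+\lfloor\varepsilon n\rfloor} < Z_k\}$. Then, pathwise, $Z^*_{0, n+\lfloor\varepsilon n\rfloor} - Z^*_{\lfloor\varepsilon n\rfloor, n+\lfloor\varepsilon n\rfloor} \le \big(\max_{1\le k\le\lfloor\varepsilon n\rfloor}(Z_{k-1}-Z_k)\big) \cdot M_n$. -/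

import Mathlib

open Finset

noncomputable section

private lemma ciSup_subtype_eq_sup' (s : Finset ℕ) (hs : s.Nonempty) (f : ℕ → ℝ) :
    (⨆ k : s, f k.1) = s.sup' hs f := by
  rw [Finset.sup'_eq_csSup_image, iSup]
  congr 1
  ext x
  simp [Set.range, Set.mem_image]

/-- Pathwise combinatorial inequality: with `N = ⌊ε n⌋`,
`Z*₀,ₙ₊ₙ' - Z*ₙ',ₙ₊ₙ' ≤ (max_{1≤k≤N}(Z_{k-1} - Z_k)) · M_n`, where `M_n` counts the
indices `0 ≤ k ≤ N - 1` such that `max_{k+1 ≤ j ≤ n+N} Z_j < Z_k`. -/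
theorem stmt17 (Z : ℕ → ℝ) (hZ0 : Z 0 = 0) (ε : ℝ) (hε : 0 < ε)
    (n : ℕ) (hn : 1 ≤ n) :
    (⨆ k : Finset.Icc 0 (n + ⌊ε * n⌋₊), Z k.1)
      - (⨆ k : Finset.Icc ⌊ε * n⌋₊ (n + ⌊ε * n⌋₊), Z k.1)
    ≤ (⨆ k : Finset.Icc 1 ⌊ε * n⌋₊, (Z (k.1 - 1) - Z k.1))
      * (Set.ncard {k : ℕ | k < ⌊ε * n⌋₊
          ∧ (⨆ j : Finset.Icc (k + 1) (n + ⌊ε * n⌋₊), Z j.1) < Z k}) := by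
  set N := ⌊ε * n⌋₊ with hN
  set b := n + N with hb
  have hNb : N ≤ b := Nat.le_add_left _ _
  rcases Nat.eq_zero_or_pos N with hN0 | hN1
  · -- N = 0 : LHS = 0, RHS = 0
    have hset : {k : ℕ | k < N
        ∧ (⨆ j : Finset.Icc (k + 1) b, Z j.1) < Z k} = ∅ := by
      ext k; simp [hN0]
    rw [hset, hN0]
    simp
  · -- main case
    -- the "g" function
    have hne : ∀ k, k ≤ b → (Finset.Icc k b).Nonempty := fun k hk =>
      Finset.nonempty_Icc.2 hk
    set g : ℕ → ℝ := fun k => sSup (Z '' ↑(Finset.Icc k b)) with hg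
    have hgsup : ∀ k (hk : k ≤ b), g k = (Finset.Icc k b).sup' (hne k hk) Z := by
      intro k hk
      rw [Finset.sup'_eq_csSup_image]
    have hisup : ∀ k (hk : k ≤ b),
        (⨆ j : Finset.Icc k b, Z j.1) = g k := by
      intro k hk
      rw [ciSup_subtype_eq_sup' _ (hne k hk), hgsup k hk]
    -- recurrence
    have hrec : ∀ k, k < b → g k = max (Z k) (g (k + 1)) := by
      intro k hk
      have hins : Finset.Icc k b = insert k (Finset.Icc (k + 1) b) := by
        ext x; simp; omega
      have h1 : g k = sSup (insert (Z k) (Z '' ↑(Finset.Icc (k + 1) b))) := by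
        rw [hg]
        simp only []
        rw [hins, Finset.coe_insert, Set.image_insert_eq]
      rw [h1, csSup_insert ((Finset.Icc (k + 1) b).finite_toSet.image Z).bddAbove
        ((hne (k + 1) hk).to_set.image Z)]
    have hZle : ∀ k, k ≤ b → Z k ≤ g k := by
      intro k hk
      rw [hgsup k hk]
      exact Finset.le_sup' Z (Finset.mem_Icc.2 ⟨le_refl _, hk⟩)
    -- D
    have hDne : (Finset.Icc 1 N).Nonempty := Finset.nonempty_Icc.2 hN1
    set D : ℝ := (Finset.Icc 1 N).sup' hDne (fun j => Z (j - 1) - Z j) with hD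
    have hDsup : (⨆ k : Finset.Icc 1 N, (Z (k.1 - 1) - Z k.1)) = D := by
      rw [hD]
      exact ciSup_subtype_eq_sup' (Finset.Icc 1 N) hDne (fun j => Z (j - 1) - Z j)
    -- the filter set
    set F : Finset ℕ := (Finset.range N).filter (fun k => g (k + 1) < Z k) with hF
    have hsetF : {k : ℕ | k < N
        ∧ (⨆ j : Finset.Icc (k + 1) b, Z j.1) < Z k} = ↑F := by
      ext k
      simp only [Set.mem_setOf_eq, hF, Finset.coe_filter, Finset.mem_range]
      constructor
      · rintro ⟨hk, hlt⟩
        refine ⟨hk, ?_⟩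
        rwa [hisup (k + 1) (by omega)] at hlt
      · rintro ⟨hk, hlt⟩
        refine ⟨hk, ?_⟩
        rwa [hisup (k + 1) (by omega)]
    -- rewrite goal
    rw [hisup 0 (by omega), hisup N hNb, hDsup, hsetF, Set.ncard_coe_finset]
    -- telescoping
    have htel : g 0 - g N = ∑ k ∈ Finset.range N, (g k - g (k + 1)) :=
      (Finset.sum_range_sub' g N).symm
    have hfilter : ∑ k ∈ Finset.range N, (g k - g (k + 1)) = ∑ k ∈ F, (g k - g (k + 1)) := by
      rw [hF]
      refine (Finset.sum_filter_of_ne ?_).symm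
      intro k hk hne0
      simp only [Finset.mem_range] at hk
      by_contra hc
      push_neg at hc
      have := hrec k (by omega)
      rw [max_eq_right hc] at this
      exact hne0 (by rw [this]; ring)
    have hbound : ∀ k ∈ F, g k - g (k + 1) ≤ D := by
      intro k hk
      simp only [hF, Finset.mem_filter, Finset.mem_range] at hk
      obtain ⟨hkN, hlt⟩ := hk
      have h1 : g k = Z k := by
        rw [hrec k (by omega), max_eq_left (le_of_lt hlt)]
      have h2 : Z (k + 1) ≤ g (k + 1) := hZle (k + 1) (by omega)
      have h3 : Z k - Z (k + 1) ≤ D := by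
        have hmem : k + 1 ∈ Finset.Icc 1 N := Finset.mem_Icc.2 ⟨by omega, by omega⟩
        have h4 := Finset.le_sup' (fun j => Z (j - 1) - Z j) hmem
        rw [← hD] at h4
        simpa using h4
      linarith
    calc g 0 - g N = ∑ k ∈ F, (g k - g (k + 1)) := by rw [htel, hfilter]
      _ ≤ ∑ _k ∈ F, D := Finset.sum_le_sum hbound
      _ = D * F.card := by rw [Finset.sum_const, nsmul_eq_mul, mul_comm]
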